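/- Let X and Y be finite-dimensional real vector spaces with seminorms p and q respectively, let X̃ and Ỹ be finite-dimensional real normed spaces with surjective linear maps π_X : X → X̃ and π_Y : Y → Ỹ satisfying ‖π_X(x)‖ = p(x) for all x ∈ X and ‖π_Y(y)‖ = q(y) for all y ∈ Y. Let ε > 0, r ∈ ℕ, and let Z be a finite-dimensional real normed space such that every colouring c : Emb(X̃,Z) → {0,…,r−1} admits ρ ∈ Emb(Ỹ,Z) and i < r with ρ ∘ Emb(X̃,Ỹ) ⊆ (c⁻¹{i})_ε. Let W = Z × Z equipped with the seminorm N(z₁,z₂) = ‖z₁‖. Then every colouring c : Emb((X,p),(W,N)) → {0,…,r−1} admits σ ∈ Emb((Y,q),(W,N)) and i < r with σ ∘ Emb((X,p),(Y,q)) ⊆ (c⁻¹{i})_ε. -/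

import Mathlib

/-- transferring the approximate Ramsey property from a normed-space
amalgam `Z` to the seminormed setting via `W = Z × Z` with `N(z₁,z₂) = ‖z₁‖`. -/
theorem stmt_13 {X Y X' Y' Z : Type*}
    [AddCommGroup X] [Module ℝ X] [FiniteDimensional ℝ X]
    [AddCommGroup Y] [Module ℝ Y] [FiniteDimensional ℝ Y]
    [NormedAddCommGroup X'] [NormedSpace ℝ X'] [FiniteDimensional ℝ X']
    [NormedAddCommGroup Y'] [NormedSpace ℝ Y'] [FiniteDimensional ℝ Y']
    [NormedAddCommGroup Z] [NormedSpace ℝ Z] [FiniteDimensional ℝ Z]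
    (p : Seminorm ℝ X) (q : Seminorm ℝ Y)
    (πX : X →ₗ[ℝ] X') (hπXsurj : Function.Surjective πX) (hπX : ∀ x, ‖πX x‖ = p x)
    (πY : Y →ₗ[ℝ] Y') (hπYsurj : Function.Surjective πY) (hπY : ∀ y, ‖πY y‖ = q y)
    (ε : ℝ) (hε : 0 < ε) (r : ℕ)
    (hZ : ∀ c : (X' →ₗ[ℝ] Z) → ℕ,
      (∀ φ : X' →ₗ[ℝ] Z, (∀ a, ‖φ a‖ = ‖a‖) → c φ < r) →
      ∃ ρ : Y' →ₗ[ℝ] Z, (∀ b, ‖ρ b‖ = ‖b‖) ∧ ∃ i < r,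
        ∀ η : X' →ₗ[ℝ] Y', (∀ a, ‖η a‖ = ‖a‖) →
          ∃ μ : X' →ₗ[ℝ] Z, (∀ a, ‖μ a‖ = ‖a‖) ∧ c μ = i ∧
            ∀ a, ‖a‖ ≤ 1 → ‖(ρ.comp η) a - μ a‖ ≤ ε)
    (N : Seminorm ℝ (Z × Z)) (hN : ∀ w : Z × Z, N w = ‖w.1‖) :
    ∀ c : (X →ₗ[ℝ] Z × Z) → ℕ,
      (∀ φ : X →ₗ[ℝ] Z × Z, (∀ a, N (φ a) = p a) → c φ < r) →
      ∃ σ : Y →ₗ[ℝ] Z × Z, (∀ b, N (σ b) = q b) ∧ ∃ i < r,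
        ∀ η : X →ₗ[ℝ] Y, (∀ a, q (η a) = p a) →
          ∃ μ : X →ₗ[ℝ] Z × Z, (∀ a, N (μ a) = p a) ∧ c μ = i ∧
            ∀ a, p a ≤ 1 → N ((σ.comp η) a - μ a) ≤ ε := by
  intro c hc
  -- a linear section of πX
  obtain ⟨s, hs⟩ := πX.exists_rightInverse_of_surjective (LinearMap.range_eq_top.2 hπXsurj)
  have hs' : ∀ a : X', πX (s a) = a := fun a => congrArg (· a) hs
  -- lift of an embedding X' → Z to X → Z × Z
  let lift : (X' →ₗ[ℝ] Z) → (X →ₗ[ℝ] Z × Z) := fun ψ => (ψ.comp πX).prod 0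
  have hlift : ∀ (ψ : X' →ₗ[ℝ] Z), (∀ a, ‖ψ a‖ = ‖a‖) → ∀ x, N (lift ψ x) = p x := by
    intro ψ hψ x
    simp only [lift, hN, LinearMap.prod_apply, LinearMap.comp_apply, Function.prod]
    rw [hψ, hπX]
  let c' : (X' →ₗ[ℝ] Z) → ℕ := fun ψ => c (lift ψ)
  have hc' : ∀ ψ : X' →ₗ[ℝ] Z, (∀ a, ‖ψ a‖ = ‖a‖) → c' ψ < r := by
    intro ψ hψ
    exact hc _ (hlift ψ hψ)
  obtain ⟨ρ, hρ, i, hi, hprop⟩ := hZ c' hc'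
  refine ⟨(ρ.comp πY).prod 0, ?_, i, hi, ?_⟩
  · intro b
    simp only [hN, LinearMap.prod_apply, LinearMap.comp_apply, Function.prod]
    rw [hρ, hπY]
  · intro η hη
    -- induced map X' → Y'
    let η' : X' →ₗ[ℝ] Y' := πY.comp (η.comp s)
    have key : ∀ x : X, πY (η (s (πX x))) = πY (η x) := by
      intro x
      have : ‖πY (η (s (πX x))) - πY (η x)‖ = 0 := by
        rw [← map_sub, ← map_sub, hπY, hη, ← hπX]
        simp [hs' (πX x)]
      simpa [sub_eq_zero] using norm_eq_zero.mp this
    have hη' : ∀ a : X', ‖η' a‖ = ‖a‖ := by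
      intro a
      simp only [η', LinearMap.comp_apply]
      rw [hπY, hη, ← hπX, hs' a]
    obtain ⟨μ', hμ', hcμ', hclose⟩ := hprop η' hη'
    refine ⟨lift μ', hlift μ' hμ', hcμ', ?_⟩
    intro a ha
    have : N (((ρ.comp πY).prod 0).comp η a - lift μ' a)
        = ‖(ρ.comp η') (πX a) - μ' (πX a)‖ := by
      simp only [hN, lift, LinearMap.comp_apply, LinearMap.prod_apply, Function.prod,
        Prod.fst_sub, η']
      rw [key a]
    rw [this]
    exact hclose (πX a) (by rw [hπX]; exact ha)
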